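/- The bounded operator T := I − 𝓜_{z_n} 𝓜_{z_n}* on H²(∂_d△ₙ) satisfies 𝓜_{z_j}^{*k} T 𝓜_{z_i}^{k} = 0 for every integer k ≥ 1 and all 1 ≤ i, j ≤ n, yet T is not a compact operator. (Hence the converse of the compactness criterion fails for the Hartogs triangle.) -/

import Mathlib

open MeasureTheory Filter Topology ComplexConjugate

noncomputable section

instance fact_one_pos : Fact ((0:ℝ) < 1) := ⟨one_pos⟩

abbrev Torus (n : ℕ) := Fin n → AddCircle (1 : ℝ)

abbrev L2T (n : ℕ) := Lp ℂ 2 (volume : Measure (Torus n))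

abbrev LinfT (n : ℕ) := Lp ℂ ⊤ (volume : Measure (Torus n))

def char {n : ℕ} (α : Fin n → ℤ) : Torus n → ℂ := fun x => ∏ j, fourier (α j) (x j)

lemma char_continuous {n : ℕ} (α : Fin n → ℤ) : Continuous (char α) :=
  continuous_finset_prod _ fun j _ => (fourier (α j)).continuous.comp (continuous_apply j)

lemma char_memLp {n : ℕ} (α : Fin n → ℤ) (p : ENNReal) :
    MemLp (char α) p (volume : Measure (Torus n)) := by
  refine (memLp_top_of_bound ((char_continuous α).aestronglyMeasurable) 1 ?_).mono_exponent le_top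
  filter_upwards with x
  simp only [char, norm_prod]
  calc ∏ j, ‖fourier (α j) (x j)‖
      = ∏ j : Fin n, (1:ℝ) := by
        refine Finset.prod_congr rfl fun j _ => ?_
        rw [fourier_apply]; exact Circle.norm_coe _
    _ ≤ 1 := by simp

def charL2 {n : ℕ} (α : Fin n → ℤ) : L2T n := (char_memLp α 2).toLp (char α)

def hardyT (n : ℕ) : Submodule ℂ (L2T n) :=
  (Submodule.span ℂ
    (charL2 '' {α : Fin n → ℤ | ∀ k : Fin n, 0 ≤ (∑ j ∈ Finset.Iic k, α j) + (k.val : ℤ)})).topologicalClosure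

def hardyD (n : ℕ) : Submodule ℂ (L2T n) :=
  (Submodule.span ℂ (charL2 '' {α : Fin n → ℤ | ∀ j, 0 ≤ α j})).topologicalClosure

instance hardyT.completeSpace (n : ℕ) : CompleteSpace (hardyT n) :=
  (Submodule.isClosed_topologicalClosure _).completeSpace_coe

instance hardyD.completeSpace (n : ℕ) : CompleteSpace (hardyD n) :=
  (Submodule.isClosed_topologicalClosure _).completeSpace_coe

def IsToeplitzOn {n : ℕ} (K : Submodule ℂ (L2T n)) (φ : Torus n → ℂ) (T : K →L[ℂ] K) : Prop :=
  ∀ f g : K,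
    (inner ℂ ((g : L2T n)) ((T f : L2T n)) : ℂ) =
      ∫ x, conj ((g : L2T n) x) * (φ x * (f : L2T n) x) ∂volume

def IsCoordMult {n : ℕ} (j : Fin n) (M : hardyT n →L[ℂ] hardyT n) : Prop :=
  ∀ f : hardyT n,
    ((M f : L2T n) : Torus n → ℂ) =ᵐ[volume]
      fun x => fourier 1 (x j) * ((f : L2T n) : Torus n → ℂ) x

def IsHankelT {n : ℕ} (φ : Torus n → ℂ) (H : hardyT n →L[ℂ] L2T n) : Prop :=
  (∀ f : hardyT n, H f ∈ (hardyT n)ᗮ) ∧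
    ∀ f : hardyT n, ∀ g : L2T n, g ∈ (hardyT n)ᗮ →
      (inner ℂ g (H f) : ℂ) = ∫ x, conj (g x) * (φ x * (f : L2T n) x) ∂volume

def IsAnalyticSymbolF {n : ℕ} (φ : Torus n → ℂ) : Prop :=
  ∀ α : Fin n → ℤ, (¬ ∀ k : Fin n, 0 ≤ ∑ j ∈ Finset.Iic k, α j) →
    ∫ x, φ x * char (-α) x ∂(volume : Measure (Torus n)) = 0

def IsInnerSymbolF {n : ℕ} (φ : Torus n → ℂ) : Prop :=
  IsAnalyticSymbolF φ ∧ ∀ᵐ x ∂(volume : Measure (Torus n)), ‖φ x‖ = 1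

def tauMap {n : ℕ} (x : Torus n) : Torus n := fun j => ∑ k ∈ Finset.Ici j, x k

def sigmaMap {n : ℕ} (x : Torus n) : Torus n :=
  fun j => if h : (j : ℕ) + 1 < n then x j - x ⟨(j : ℕ) + 1, h⟩ else x j

def jacF {n : ℕ} (x : Torus n) : ℂ := ∏ j : Fin n, fourier (j.val : ℤ) (x j)

def jacInvF {n : ℕ} (x : Torus n) : ℂ :=
  ∏ j : Fin n, fourier (if j.val = 0 then (0 : ℤ) else -1) (x j)

section Stmt11Aux

open MeasureTheory ComplexConjugate

variable {n : ℕ}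

lemma norm_fourier (m : ℤ) (y : AddCircle (1:ℝ)) : ‖(fourier m y : ℂ)‖ = 1 := by
  rw [fourier_apply]
  exact Circle.norm_coe _

lemma char_norm (α : Fin n → ℤ) (x : Torus n) : ‖char α x‖ = 1 := by
  simp only [char]
  rw [norm_prod, Finset.prod_eq_one]
  intro j _
  exact norm_fourier _ _

lemma char_mul (α β : Fin n → ℤ) (x : Torus n) : char α x * char β x = char (α + β) x := by
  simp only [char, Pi.add_apply, fourier_add, ← Finset.prod_mul_distrib]

lemma char_conj (α : Fin n → ℤ) (x : Torus n) : conj (char α x) = char (-α) x := by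
  simp only [char, map_prod, Pi.neg_apply, fourier_neg]

lemma char_single (i : Fin n) (c : ℤ) (x : Torus n) :
    char (fun j => if j = i then c else 0) x = fourier c (x i) := by
  simp only [char]
  rw [Finset.prod_eq_single_of_mem i (Finset.mem_univ i)]
  · rw [if_pos rfl]
  · intro b _ hb
    rw [if_neg hb, fourier_zero]

lemma memℒp_mulChar (β : Fin n → ℤ) (f : L2T n) :
    MemLp (fun x => char β x * f x) 2 (volume : Measure (Torus n)) := by
  refine (Lp.memLp f).of_le
    ((char_continuous β).aestronglyMeasurable.mul (Lp.aestronglyMeasurable f)) ?_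
  filter_upwards with x
  rw [norm_mul, char_norm, one_mul]

/-- Multiplication by the character `char β` as a linear isometry on `L²` of the torus. -/
def mulChar (β : Fin n → ℤ) : L2T n →ₗᵢ[ℂ] L2T n where
  toFun f := (memℒp_mulChar β f).toLp _
  map_add' f g := by
    rw [← MemLp.toLp_add]
    apply MemLp.toLp_congr
    filter_upwards [Lp.coeFn_add f g] with x hx
    simp only [hx, Pi.add_apply, mul_add]
  map_smul' c f := by
    show MemLp.toLp (fun x => char β x * (c • f) x) (memℒp_mulChar β (c • f))
      = c • MemLp.toLp (fun x => char β x * f x) (memℒp_mulChar β f)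
    rw [← MemLp.toLp_const_smul c (memℒp_mulChar β f)]
    exact MemLp.toLp_congr _ _ (by
      filter_upwards [Lp.coeFn_smul c f] with x hx
      simp only [hx, Pi.smul_apply, smul_eq_mul]
      ring)
  norm_map' f := by
    show ‖MemLp.toLp (fun x => char β x * f x) (memℒp_mulChar β f)‖ = ‖f‖
    rw [Lp.norm_toLp, Lp.norm_def]
    congr 1
    apply eLpNorm_congr_norm_ae
    filter_upwards with x
    rw [norm_mul, char_norm, one_mul]

lemma mulChar_coeFn (β : Fin n → ℤ) (f : L2T n) :
    ⇑(mulChar β f) =ᵐ[volume] fun x => char β x * f x :=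
  MemLp.coeFn_toLp (memℒp_mulChar β f)

lemma charL2_coeFn (α : Fin n → ℤ) : ⇑(charL2 (n := n) α) =ᵐ[volume] char α :=
  MemLp.coeFn_toLp _

lemma mulChar_charL2 (β α : Fin n → ℤ) : mulChar β (charL2 α) = charL2 (β + α) := by
  apply Lp.ext
  filter_upwards [mulChar_coeFn β (charL2 α), charL2_coeFn (n := n) α,
    charL2_coeFn (n := n) (β + α)] with x h1 h2 h3
  rw [h1, h2, h3, char_mul]

lemma charL2_mem_hardyT {α : Fin n → ℤ}
    (hα : ∀ k : Fin n, 0 ≤ (∑ j ∈ Finset.Iic k, α j) + (k.val : ℤ)) :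
    charL2 α ∈ hardyT n :=
  Submodule.le_topologicalClosure _ (Submodule.subset_span ⟨α, hα, rfl⟩)

lemma mulChar_mem_hardyT {β : Fin n → ℤ}
    (hβ : ∀ m : Fin n, 0 ≤ ∑ j ∈ Finset.Iic m, β j) {f : L2T n} (hf : f ∈ hardyT n) :
    mulChar β f ∈ hardyT n := by
  have hle : hardyT n ≤
      (hardyT n).comap (mulChar (n := n) β).toLinearMap := by
    apply Submodule.topologicalClosure_minimal
    · rw [Submodule.span_le]
      rintro _ ⟨α, hα, rfl⟩
      simp only [SetLike.mem_coe, Submodule.mem_comap, LinearIsometry.coe_toLinearMap]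
      rw [mulChar_charL2]
      apply charL2_mem_hardyT
      intro m
      have h1 := hβ m
      have h2 := hα m
      simp only [Pi.add_apply]
      rw [Finset.sum_add_distrib]
      omega
    · exact IsClosed.preimage (mulChar β).continuous
        (Submodule.isClosed_topologicalClosure _)
  exact hle hf

lemma integral_fourier (m : ℤ) :
    ∫ x : AddCircle (1:ℝ), fourier m x ∂volume = if m = 0 then 1 else 0 := by
  rw [AddCircle.volume_eq_smul_haarAddCircle, integral_smul_measure]
  simp only [ENNReal.ofReal_one, ENNReal.toReal_one, one_smul]
  rcases eq_or_ne m 0 with h | h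
  · subst h
    rw [if_pos rfl]
    have : (fun x : AddCircle (1:ℝ) => (fourier 0 : C(AddCircle (1:ℝ), ℂ)) x)
        = fun _ => (1:ℂ) := funext fun x => fourier_zero
    rw [this, integral_const]
    simp
  · rw [if_neg h]
    have ho := orthonormal_fourier (T := 1)
    rw [orthonormal_iff_ite] at ho
    have h2 := ho 0 m
    rw [ContinuousMap.inner_toLp, if_neg (fun hh => h hh.symm)] at h2
    simpa [fourier_zero] using h2

lemma integral_char (α : Fin n → ℤ) :
    ∫ x : Torus n, char α x ∂volume = if α = 0 then 1 else 0 := by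
  have h := MeasureTheory.integral_fintype_prod_eq_prod (𝕜 := ℂ) (ι := Fin n)
    (fun j (y : AddCircle (1:ℝ)) => fourier (α j) y) (μ := fun _ => volume)
  simp only [char]
  refine h.trans ?_
  simp only [integral_fourier]
  rcases eq_or_ne α 0 with h0 | h0
  · subst h0
    simp
  · rw [if_neg h0]
    obtain ⟨j, hj⟩ : ∃ j, α j ≠ 0 := by
      by_contra hc
      push_neg at hc
      exact h0 (funext hc)
    exact Finset.prod_eq_zero (Finset.mem_univ j) (by rw [if_neg hj])

lemma inner_charL2 (α β : Fin n → ℤ) :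
    (inner ℂ (charL2 (n := n) α) (charL2 β) : ℂ) = if α = β then 1 else 0 := by
  rw [MeasureTheory.L2.inner_def]
  have heq : ∫ x, (inner ℂ ((charL2 (n := n) α) x) ((charL2 β) x) : ℂ) ∂volume
      = ∫ x : Torus n, char (-α + β) x ∂volume := by
    apply integral_congr_ae
    filter_upwards [charL2_coeFn (n := n) α, charL2_coeFn (n := n) β] with x h1 h2
    rw [h1, h2, RCLike.inner_apply', char_conj, char_mul]
  rw [heq, integral_char]
  congr 1
  simp [neg_add_eq_zero, eq_comm]

lemma fourier_one_pow (k : ℕ) (y : AddCircle (1:ℝ)) :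
    (fourier 1 y : ℂ) ^ k = fourier (k : ℤ) y := by
  induction k with
  | zero => rw [pow_zero, Nat.cast_zero, fourier_zero]
  | succ k ih =>
    rw [pow_succ, ih, ← fourier_add]
    norm_num

section WithM

variable {M : Fin n → (hardyT n →L[ℂ] hardyT n)}

lemma M_norm (hM : ∀ j, IsCoordMult j (M j)) (j : Fin n) (f : hardyT n) :
    ‖M j f‖ = ‖f‖ := by
  show ‖((M j f : L2T n))‖ = ‖(f : L2T n)‖
  rw [Lp.norm_def, Lp.norm_def]
  congr 1
  rw [eLpNorm_congr_ae (hM j f)]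
  apply eLpNorm_congr_norm_ae
  filter_upwards with x
  rw [norm_mul, norm_fourier, one_mul]

lemma M_inner (hM : ∀ j, IsCoordMult j (M j)) (j : Fin n) (f g : hardyT n) :
    (inner ℂ (M j f) (M j g) : ℂ) = inner ℂ f g :=
  LinearIsometry.inner_map_map ⟨(M j).toLinearMap, M_norm hM j⟩ f g

lemma adj_M_M (hM : ∀ j, IsCoordMult j (M j)) (j : Fin n) (f : hardyT n) :
    ContinuousLinearMap.adjoint (M j) (M j f) = f := by
  apply ext_inner_right ℂ
  intro g
  rw [ContinuousLinearMap.adjoint_inner_left, M_inner hM j]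

lemma M_pow_coeFn (hM : ∀ j, IsCoordMult j (M j)) (i : Fin n) (k : ℕ) (f : hardyT n) :
    ((((M i) ^ k) f : L2T n) : Torus n → ℂ) =ᵐ[volume]
      fun x => (fourier 1 (x i) : ℂ) ^ k * ((f : L2T n) : Torus n → ℂ) x := by
  induction k generalizing f with
  | zero =>
    rw [pow_zero]
    filter_upwards with x
    simp
  | succ k ih =>
    rw [pow_succ, ContinuousLinearMap.mul_apply]
    filter_upwards [ih (M i f), hM i f] with x hx1 hx2
    rw [hx1, hx2, pow_succ]
    ring

lemma M_mulChar_eq (hM : ∀ j, IsCoordMult j (M j)) (j : Fin n) (g : hardyT n) :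
    ((M j g : hardyT n) : L2T n)
      = mulChar (fun l => if l = j then (1:ℤ) else 0) (g : L2T n) := by
  apply Lp.ext
  filter_upwards [hM j g, mulChar_coeFn (fun l => if l = j then (1:ℤ) else 0) (g : L2T n)]
    with x h1 h2
  rw [h1, h2, char_single]

set_option maxHeartbeats 1000000 in
lemma key_surj (hn : 2 ≤ n) (hM : ∀ j, IsCoordMult j (M j)) (lastI : Fin n)
    (hlast : (lastI : ℕ) = n - 1) (i : Fin n) (k : ℕ) (hk : 1 ≤ k) (f : hardyT n) :
    (M lastI) (ContinuousLinearMap.adjoint (M lastI) (((M i) ^ k) f)) = ((M i) ^ k) f := by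
  have hile : i ≤ lastI := by
    rw [Fin.le_def, hlast]
    have := i.isLt
    omega
  set β : Fin n → ℤ :=
    (fun l => if l = i then (k:ℤ) else 0) + (fun l => if l = lastI then (-1:ℤ) else 0) with hβdef
  have hβ : ∀ m : Fin n, 0 ≤ ∑ j ∈ Finset.Iic m, β j := by
    intro m
    simp only [hβdef, Pi.add_apply]
    rw [Finset.sum_add_distrib, Finset.sum_ite_eq' _ i, Finset.sum_ite_eq' _ lastI]
    simp only [Finset.mem_Iic]
    by_cases h1 : lastI ≤ m
    · rw [if_pos h1, if_pos (le_trans hile h1)]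
      omega
    · rw [if_neg h1]
      split_ifs <;> omega
  have hg0 : mulChar β (f : L2T n) ∈ hardyT n := mulChar_mem_hardyT hβ f.2
  set g : hardyT n := ⟨mulChar β (f : L2T n), hg0⟩ with hgdef
  have hVg : (M lastI) g = ((M i) ^ k) f := by
    apply Subtype.ext
    apply Lp.ext
    filter_upwards [hM lastI g, mulChar_coeFn β (f : L2T n), M_pow_coeFn hM i k f]
      with x h1 h2 h3
    rw [h1]
    have hgx : ((g : L2T n) : Torus n → ℂ) x = char β x * ((f : L2T n) : Torus n → ℂ) x := h2
    rw [hgx, h3, fourier_one_pow]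
    have hsplit : char β x = fourier (k:ℤ) (x i) * fourier (-1 : ℤ) (x lastI) := by
      rw [hβdef, ← char_mul, char_single, char_single]
    rw [hsplit]
    have hone : (fourier 1 (x lastI) : ℂ) * fourier (-1 : ℤ) (x lastI) = 1 := by
      rw [← fourier_add]
      norm_num
    calc (fourier 1 (x lastI) : ℂ) *
          (fourier (k:ℤ) (x i) * fourier (-1:ℤ) (x lastI) * ((f : L2T n) : Torus n → ℂ) x)
        = (fourier 1 (x lastI) * fourier (-1:ℤ) (x lastI)) *
          (fourier (k:ℤ) (x i) * ((f : L2T n) : Torus n → ℂ) x) := by ring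
      _ = fourier (k:ℤ) (x i) * ((f : L2T n) : Torus n → ℂ) x := by rw [hone, one_mul]
  rw [← hVg, adj_M_M hM, hVg]

set_option maxHeartbeats 1000000 in
lemma adj_vanish (hM : ∀ j, IsCoordMult j (M j)) (lastI : Fin n) {α : Fin n → ℤ}
    (hα : ∀ k : Fin n, 0 ≤ (∑ j ∈ Finset.Iic k, α j) + (k.val : ℤ))
    (hα' : ∀ γ : Fin n → ℤ, (∀ k : Fin n, 0 ≤ (∑ j ∈ Finset.Iic k, γ j) + (k.val : ℤ)) →
      (fun l => if l = lastI then (1:ℤ) else 0) + γ ≠ α) :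
    ContinuousLinearMap.adjoint (M lastI) (⟨charL2 α, charL2_mem_hardyT hα⟩ : hardyT n) = 0 := by
  set eL : Fin n → ℤ := fun l => if l = lastI then (1:ℤ) else 0 with heL
  apply ext_inner_right ℂ
  intro g
  rw [ContinuousLinearMap.adjoint_inner_left, inner_zero_left]
  rw [Submodule.coe_inner]
  rw [M_mulChar_eq hM lastI g]
  set Φ : L2T n →L[ℂ] ℂ :=
    (innerSL ℂ (charL2 α)).comp (mulChar (n := n) eL).toContinuousLinearMap with hΦ
  have hker : hardyT n ≤ Φ.ker := by
    apply Submodule.topologicalClosure_minimal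
    · rw [Submodule.span_le]
      rintro _ ⟨γ, hγ, rfl⟩
      simp only [SetLike.mem_coe, LinearMap.mem_ker, ContinuousLinearMap.coe_coe, hΦ, ContinuousLinearMap.coe_comp',
        Function.comp_apply, LinearIsometry.coe_toContinuousLinearMap, innerSL_apply_apply]
      rw [mulChar_charL2, inner_charL2, if_neg]
      exact fun hc => hα' γ hγ hc.symm
    · exact ContinuousLinearMap.isClosed_ker Φ
  have hg : Φ (g : L2T n) = 0 := hker g.2
  simpa only [hΦ, ContinuousLinearMap.coe_comp', Function.comp_apply,
    LinearIsometry.coe_toContinuousLinearMap, innerSL_apply_apply] using hg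

end WithM

end Stmt11Aux


set_option maxHeartbeats 2000000 in
set_option synthInstance.maxHeartbeats 1000000 in
/-- `T = I − 𝓜_{z_n} 𝓜_{z_n}*` satisfies `𝓜_{z_j}^{*k} T 𝓜_{z_i}^{k} = 0` for `k ≥ 1`,
yet `T` is not compact. -/
theorem stmt11 {n : ℕ} (hn : 2 ≤ n)
    (M : Fin n → (hardyT n →L[ℂ] hardyT n)) (hM : ∀ j, IsCoordMult j (M j)) :
    (∀ k : ℕ, 1 ≤ k → ∀ i j : Fin n,
      (ContinuousLinearMap.adjoint (M j)) ^ k *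
        (1 - M ⟨n - 1, by omega⟩ * ContinuousLinearMap.adjoint (M ⟨n - 1, by omega⟩)) *
        (M i) ^ k = 0) ∧
    ¬ IsCompactOperator
        (⇑(1 - M ⟨n - 1, by omega⟩ * ContinuousLinearMap.adjoint (M ⟨n - 1, by omega⟩) :
          hardyT n →L[ℂ] hardyT n)) := by
  have hlt : n - 1 < n := by omega
  set lastI : Fin n := ⟨n - 1, hlt⟩ with hlastI
  constructor
  · intro k hk i j
    ext f
    have hkey := key_surj hn hM lastI rfl i k hk f
    simp only [ContinuousLinearMap.mul_apply, ContinuousLinearMap.sub_apply,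
      ContinuousLinearMap.one_apply, ContinuousLinearMap.zero_apply]
    rw [hkey, sub_self, map_zero]
  · intro hcpt
    have h0lt : 0 < n := by omega
    set i0 : Fin n := ⟨0, h0lt⟩ with hi0
    have hi0last : i0 ≠ lastI := by
      intro h
      have := congrArg Fin.val h
      simp only [hi0, hlastI] at this
      omega
    set αs : ℕ → (Fin n → ℤ) := fun m =>
      (fun l => if l = i0 then (m:ℤ) else 0) +
      (fun l => if l = lastI then (-(m:ℤ) - ((n:ℤ) - 1)) else 0) with hαs
    have hlastval : (lastI : ℕ) = n - 1 := rfl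
    have hS : ∀ m, ∀ k : Fin n, 0 ≤ (∑ j ∈ Finset.Iic k, αs m j) + (k.val:ℤ) := by
      intro m p
      simp only [hαs, Pi.add_apply]
      rw [Finset.sum_add_distrib, Finset.sum_ite_eq' _ i0, Finset.sum_ite_eq' _ lastI]
      simp only [Finset.mem_Iic]
      have hi0p : i0 ≤ p := by
        rw [Fin.le_def]
        simp [hi0]
      rw [if_pos hi0p]
      have hple : (p:ℕ) ≤ n - 1 := by have := p.isLt; omega
      by_cases h1 : lastI ≤ p
      · have hpv : (p:ℕ) = n - 1 := by
          rw [Fin.le_def, hlastval] at h1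
          omega
        rw [if_pos h1, hpv]
        push_cast
        omega
      · rw [if_neg h1]
        omega
    set e : ℕ → hardyT n := fun m => ⟨charL2 (αs m), charL2_mem_hardyT (hS m)⟩ with he
    have hnot : ∀ m, ∀ γ : Fin n → ℤ,
        (∀ k : Fin n, 0 ≤ (∑ j ∈ Finset.Iic k, γ j) + (k.val:ℤ)) →
        (fun l => if l = lastI then (1:ℤ) else 0) + γ ≠ αs m := by
      intro m γ hγ heq
      have hγl := hγ lastI
      have hγeq : ∀ l, γ l = αs m l - (if l = lastI then (1:ℤ) else 0) := by
        intro l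
        have h := congrFun heq l
        simp only [Pi.add_apply] at h
        omega
      rw [Finset.sum_congr rfl (fun l _ => hγeq l), Finset.sum_sub_distrib] at hγl
      simp only [hαs, Pi.add_apply] at hγl
      rw [Finset.sum_add_distrib, Finset.sum_ite_eq' _ i0, Finset.sum_ite_eq' _ lastI,
        Finset.sum_ite_eq' _ lastI] at hγl
      simp only [Finset.mem_Iic] at hγl
      have h1 : i0 ≤ lastI := by
        rw [Fin.le_def, hlastval]
        simp [hi0]
      rw [if_pos h1, if_pos (le_refl lastI), if_pos (le_refl lastI)] at hγl
      omega
    have hadj : ∀ m, ContinuousLinearMap.adjoint (M lastI) (e m) = 0 := fun m =>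
      adj_vanish hM lastI (hS m) (hnot m)
    have hTe : ∀ m,
        (1 - M lastI * ContinuousLinearMap.adjoint (M lastI)) (e m) = e m := by
      intro m
      simp only [ContinuousLinearMap.sub_apply, ContinuousLinearMap.one_apply,
        ContinuousLinearMap.mul_apply, hadj m, map_zero, sub_zero]
    have hαi0 : ∀ m : ℕ, αs m i0 = (m:ℤ) := by
      intro m
      simp only [hαs, Pi.add_apply, if_neg hi0last, add_zero]
      simp
    have hαinj : ∀ m m' : ℕ, αs m = αs m' → m = m' := by
      intro m m' h
      have h2 := congrFun h i0
      rw [hαi0, hαi0] at h2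
      exact_mod_cast h2
    have hinner : ∀ m m', (inner ℂ (e m) (e m') : ℂ) = if m = m' then 1 else 0 := by
      intro m m'
      rw [Submodule.coe_inner]
      show (inner ℂ (charL2 (αs m)) (charL2 (αs m')) : ℂ) = _
      rw [inner_charL2]
      rcases eq_or_ne m m' with h | h
      · rw [if_pos h, if_pos (by rw [h])]
      · rw [if_neg h, if_neg (fun hc => h (hαinj _ _ hc))]
    have hnorm1 : ∀ m, ‖e m‖ = 1 := by
      intro m
      have h2 := (inner_self_eq_norm_sq_to_K (𝕜 := ℂ) (e m)).symm.trans (hinner m m)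
      rw [if_pos rfl] at h2
      have h3 : (‖e m‖:ℝ)^2 = 1 := by
        have h4 : ((‖e m‖^2 : ℝ) : ℂ) = ((1:ℝ):ℂ) := by push_cast; exact h2
        exact_mod_cast h4
      have h4 : (‖e m‖ - 1) * (‖e m‖ + 1) = 0 := by nlinarith
      rcases mul_eq_zero.mp h4 with h | h
      · linarith
      · nlinarith [norm_nonneg (e m)]
    have hdist : ∀ m m', m ≠ m' → 1 ≤ ‖e m - e m'‖ := by
      intro m m' hne
      have h2 : ‖e m - e m'‖^2 = 2 := by
        rw [@norm_sub_sq ℂ]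
        rw [hinner m m', if_neg hne, hnorm1, hnorm1]
        norm_num
      nlinarith [norm_nonneg (e m - e m')]
    obtain ⟨K, hK, hKmem⟩ := hcpt
    obtain ⟨r, hr, hball⟩ := Metric.mem_nhds_iff.mp hKmem
    set c : ℂ := ((r/2 : ℝ) : ℂ) with hc
    have hcnorm : ‖c‖ = r/2 := by
      rw [hc, Complex.norm_real, Real.norm_eq_abs, abs_of_pos (by linarith)]
    have huK : ∀ m, c • e m ∈ K := by
      intro m
      have hmem : c • e m ∈ Metric.ball (0 : hardyT n) r := by
        rw [mem_ball_zero_iff]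
        rw [norm_smul, hcnorm, hnorm1, mul_one]
        linarith
      have h5 := hball hmem
      rw [Set.mem_preimage] at h5
      have hTu : (1 - M lastI * ContinuousLinearMap.adjoint (M lastI)) (c • e m)
          = c • e m := by
        rw [ContinuousLinearMap.map_smul, hTe]
      rw [← hTu]
      exact h5
    obtain ⟨a, _, φ, hφ, hconv⟩ := hK.isSeqCompact huK
    have hcauchy := hconv.cauchySeq
    rw [Metric.cauchySeq_iff] at hcauchy
    obtain ⟨N, hN⟩ := hcauchy (r/2) (by linarith)
    have h1 := hN (N+1) (by omega) N (by omega)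
    have hneq : φ (N+1) ≠ φ N := (hφ (Nat.lt_succ_self N)).ne'
    have hdeq : dist (((fun m => c • e m) ∘ φ) (N+1)) (((fun m => c • e m) ∘ φ) N)
        = (r/2) * ‖e (φ (N+1)) - e (φ N)‖ := by
      show dist (c • e (φ (N+1))) (c • e (φ N)) = _
      rw [dist_eq_norm, ← smul_sub, norm_smul, hcnorm]
    rw [hdeq] at h1
    have h3 := hdist _ _ hneq
    nlinarith
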